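/- Let G₁,…,G_k be independent uniformly random 2-element subsets of {1,…,n}. The probability that they form a 'chain' in the sense that each G_{i+1} intersects G₁ ∪ ⋯ ∪ G_i (equivalently, they form a circuit of depth k when parallelized greedily) is at most (2/n)^{k−1} · k!. -/

import Mathlib

open Finset

namespace Stmt7Aux

open Classical

variable {n : ℕ}

abbrev S (n : ℕ) := {s : Finset (Fin n) // s.card = 2}

noncomputable def chains (n k : ℕ) : Finset (Fin k → S n) :=
  Finset.univ.filter
    (fun G => ∀ i : Fin k, 0 < i.1 →
      ∃ j : Fin k, j < i ∧ ((G i).1 ∩ (G j).1).Nonempty)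

lemma two_set_eq {s : Finset (Fin n)} (hs : s.card = 2) {a b : Fin n}
    (ha : a ∈ s) (hb : b ∈ s.erase a) : s = insert a {b} := by
  have h1 : (s.erase a).card = 1 := by
    rw [card_erase_of_mem ha, hs]
  obtain ⟨c, hc⟩ := Finset.card_eq_one.mp h1
  have hbc : b = c := by rw [hc] at hb; simpa using hb
  rw [← Finset.insert_erase ha, hc, hbc]

lemma card_union_two {A s : Finset (Fin n)} (hs : s.card = 2)
    (h : (A ∩ s).Nonempty) : (A ∪ s).card ≤ A.card + 1 := by
  obtain ⟨x, hx⟩ := h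
  rw [mem_inter] at hx
  obtain ⟨y, hy⟩ : (s.erase x).Nonempty := by
    rw [← card_pos, card_erase_of_mem hx.2, hs]; norm_num
  have hseq := two_set_eq hs hx.2 hy
  have hsub : A ∪ s ⊆ insert y A := by
    intro z hz
    rcases mem_union.mp hz with hz | hz
    · exact mem_insert_of_mem hz
    · rw [hseq] at hz
      rcases mem_insert.mp hz with rfl | hz
      · exact mem_insert_of_mem hx.1
      · simp at hz; subst hz; exact mem_insert_self _ _
  exact (card_le_card hsub).trans (card_insert_le _ _)

lemma chain_union_card_le {k : ℕ} (hk0 : 0 < k) (H : Fin k → S n)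
    (hH : ∀ i : Fin k, 0 < i.1 →
      ∃ j : Fin k, j < i ∧ ((H i).1 ∩ (H j).1).Nonempty) :
    (Finset.univ.biUnion fun j : Fin k => (H j).1).card ≤ k + 1 := by
  suffices h : ∀ m, 0 < m → m ≤ k →
      ((Finset.univ.filter (fun j : Fin k => j.1 < m)).biUnion
        fun j => (H j).1).card ≤ m + 1 by
    have h2 := h k hk0 le_rfl
    have : (Finset.univ.filter (fun j : Fin k => j.1 < k)) = Finset.univ := by
      apply Finset.filter_true_of_mem; intro j _; exact j.2
    rwa [this] at h2
  intro m
  induction m with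
  | zero => intro h; omega
  | succ m ih =>
    intro _ hmk
    have hmk' : m < k := hmk
    set i : Fin k := ⟨m, hmk'⟩ with hi
    have hfil : (Finset.univ.filter (fun j : Fin k => j.1 < m + 1))
        = insert i (Finset.univ.filter (fun j : Fin k => j.1 < m)) := by
      ext j
      simp only [mem_filter, mem_insert, mem_univ, true_and, Fin.ext_iff, hi]
      omega
    rw [hfil, Finset.biUnion_insert]
    rcases Nat.eq_zero_or_pos m with rfl | hm
    · -- base: the old filter is empty
      have : (Finset.univ.filter (fun j : Fin k => j.1 < 0)) = ∅ := by
        apply Finset.filter_false_of_mem; intro j _; omega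
      rw [this, Finset.biUnion_empty, Finset.union_empty, (H i).2]
    · obtain ⟨j, hji, hnon⟩ := hH i hm
      set A := ((Finset.univ.filter (fun j : Fin k => j.1 < m)).biUnion
        fun j => (H j).1) with hA
      have hjA : (H j).1 ⊆ A := by
        rw [hA]
        exact Finset.subset_biUnion_of_mem (fun j => (H j).1)
          (by simp only [mem_filter, mem_univ, true_and]; exact hji)
      have hnon' : (A ∩ (H i).1).Nonempty := by
        obtain ⟨x, hx⟩ := hnon
        rw [mem_inter] at hx
        exact ⟨x, mem_inter.mpr ⟨hjA hx.2, hx.1⟩⟩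
      calc ((H i).1 ∪ A).card = (A ∪ (H i).1).card := by rw [union_comm]
        _ ≤ A.card + 1 := card_union_two (H i).2 hnon'
        _ ≤ m + 1 + 1 := by
            have := ih hm (le_of_lt hmk')
            omega

lemma card_meets_le (hn : 2 ≤ n) (T : Finset (Fin n)) :
    (Finset.univ.filter fun s : S n => (s.1 ∩ T).Nonempty).card
      ≤ T.card * (n - 1) := by
  have hn0 : 0 < n := by omega
  set B : Finset (Fin n × Fin n) :=
    T.biUnion (fun a => {a} ×ˢ (Finset.univ.erase a)) with hB
  have hBcard : B.card = T.card * (n - 1) := by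
    rw [hB, Finset.card_biUnion]
    · have hc : ∀ a ∈ T, ({a} ×ˢ (Finset.univ.erase a)).card = n - 1 := by
        intro a _
        rw [Finset.card_product, Finset.card_singleton,
          Finset.card_erase_of_mem (mem_univ a), Finset.card_univ,
          Fintype.card_fin, one_mul]
      rw [Finset.sum_congr rfl hc, Finset.sum_const, smul_eq_mul]
    · intro a _ a' _ hne
      rw [Function.onFun, Finset.disjoint_left]
      rintro ⟨p, q⟩ hp hq
      rw [Finset.mem_product] at hp hq
      simp only [Finset.mem_singleton] at hp hq
      exact hne (hp.1 ▸ hq.1 ▸ rfl)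
  rw [← hBcard]
  have hpf : ∀ (s : S n) (h : (s.1 ∩ T).Nonempty),
      (s.1.erase ((s.1 ∩ T).min' h)).Nonempty := by
    intro s h
    rw [← card_pos, card_erase_of_mem
      (Finset.mem_inter.mp ((s.1 ∩ T).min'_mem h)).1, s.2]
    norm_num
  set f : S n → Fin n × Fin n := fun s =>
    if h : (s.1 ∩ T).Nonempty then
      ((s.1 ∩ T).min' h, (s.1.erase ((s.1 ∩ T).min' h)).min' (hpf s h))
    else (⟨0, hn0⟩, ⟨0, hn0⟩) with hf
  apply Finset.card_le_card_of_injOn f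
  · intro s hs
    rw [mem_coe, mem_filter] at hs
    have h := hs.2
    rw [hf]
    simp only [dif_pos h]
    set a := (s.1 ∩ T).min' h with ha
    have haT : a ∈ T := (mem_inter.mp ((s.1 ∩ T).min'_mem h)).2
    have hb : (s.1.erase a).min' (hpf s h) ∈ s.1.erase a :=
      (s.1.erase a).min'_mem _
    rw [hB, mem_coe, Finset.mem_biUnion]
    refine ⟨a, haT, ?_⟩
    rw [Finset.mem_product]
    exact ⟨Finset.mem_singleton_self a,
      Finset.mem_erase.mpr ⟨(Finset.mem_erase.mp hb).1, mem_univ _⟩⟩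
  · intro s hs s' hs' heq
    simp only [Finset.coe_filter, Set.mem_setOf_eq] at hs hs'
    have h := hs.2
    have h' := hs'.2
    rw [hf] at heq
    simp only [dif_pos h, dif_pos h', Prod.mk.injEq] at heq
    obtain ⟨h1, h2⟩ := heq
    set a := (s.1 ∩ T).min' h with ha
    set a' := (s'.1 ∩ T).min' h' with ha'
    set b := (s.1.erase a).min' (hpf s h) with hbd
    set b' := (s'.1.erase a').min' (hpf s' h') with hbd'
    have has : a ∈ s.1 := (mem_inter.mp ((s.1 ∩ T).min'_mem h)).1
    have has' : a' ∈ s'.1 := (mem_inter.mp ((s'.1 ∩ T).min'_mem h')).1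
    have hb : b ∈ s.1.erase a := (s.1.erase a).min'_mem _
    have hb' : b' ∈ s'.1.erase a' := (s'.1.erase a').min'_mem _
    have e1 : s.1 = insert a {b} := two_set_eq s.2 has hb
    have e2 : s'.1 = insert a' {b'} := two_set_eq s'.2 has' hb'
    apply Subtype.ext
    simp only [e1, e2, h1, h2]

lemma init_chain {k : ℕ} {G : Fin (k + 1) → S n}
    (hG : ∀ i : Fin (k + 1), 0 < i.1 →
      ∃ j : Fin (k + 1), j < i ∧ ((G i).1 ∩ (G j).1).Nonempty) :
    ∀ i : Fin k, 0 < i.1 →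
      ∃ j : Fin k, j < i ∧ ((Fin.init G i).1 ∩ (Fin.init G j).1).Nonempty := by
  intro i hi
  obtain ⟨j, hji, hnon⟩ := hG i.castSucc (by simpa using hi)
  have hjk : j.1 < k := lt_of_lt_of_le hji (by simp [Fin.le_def])
  refine ⟨⟨j.1, hjk⟩, by simpa [Fin.lt_def] using hji, ?_⟩
  have e1 : Fin.init G i = G i.castSucc := rfl
  have e2 : Fin.init G ⟨j.1, hjk⟩ = G j := by
    show G (Fin.castSucc ⟨j.1, hjk⟩) = G j
    congr 1
  rw [e1, e2]
  exact hnon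

lemma chains_step (hn : 2 ≤ n) {k : ℕ} (hk : 1 ≤ k) :
    (chains n (k + 1)).card ≤ ((k + 1) * (n - 1)) * (chains n k).card := by
  apply Finset.card_le_mul_card_image_of_maps_to
    (f := fun G : Fin (k + 1) → S n => Fin.init G) (t := chains n k)
  · intro G hG
    rw [chains, mem_filter] at hG ⊢
    exact ⟨mem_univ _, init_chain hG.2⟩
  · intro H hH
    rw [chains, mem_filter] at hH
    set T : Finset (Fin n) := Finset.univ.biUnion fun j : Fin k => (H j).1 with hT
    have hTcard : T.card ≤ k + 1 := chain_union_card_le hk H hH.2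
    have step1 : ((chains n (k + 1)).filter fun G => Fin.init G = H).card
        ≤ (Finset.univ.filter fun s : S n => (s.1 ∩ T).Nonempty).card := by
      apply Finset.card_le_card_of_injOn (fun G => G (Fin.last k))
      · intro G hG
        rw [mem_coe, mem_filter] at hG
        obtain ⟨hG1, hG2⟩ := hG
        rw [chains, mem_filter] at hG1
        obtain ⟨j, hji, hnon⟩ := hG1.2 (Fin.last k) (by simp [Fin.last]; omega)
        have hjk : j.1 < k := hji
        have e2 : G j = H ⟨j.1, hjk⟩ := by
          rw [← hG2]
          show G j = G (Fin.castSucc ⟨j.1, hjk⟩)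
          congr 1
        rw [mem_coe, mem_filter]
        refine ⟨mem_univ _, ?_⟩
        obtain ⟨x, hx⟩ := hnon
        rw [mem_inter] at hx
        refine ⟨x, mem_inter.mpr ⟨hx.1, ?_⟩⟩
        rw [hT]
        apply Finset.mem_biUnion.mpr ⟨⟨j.1, hjk⟩, mem_univ _, ?_⟩
        rw [← e2]; exact hx.2
      · intro G hG G' hG' heq
        simp only [Finset.coe_filter, Set.mem_setOf_eq] at hG hG'
        funext i
        induction i using Fin.lastCases with
        | last => exact heq
        | cast i =>
          have := congrFun (hG.2.trans hG'.2.symm) i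
          exact this
    calc ((chains n (k + 1)).filter fun G => Fin.init G = H).card
        ≤ (Finset.univ.filter fun s : S n => (s.1 ∩ T).Nonempty).card := step1
      _ ≤ T.card * (n - 1) := card_meets_le hn T
      _ ≤ (k + 1) * (n - 1) := Nat.mul_le_mul_right _ hTcard

lemma chains_card_le (hn : 2 ≤ n) : ∀ k, 1 ≤ k →
    ((chains n k).card : ℝ) ≤ (2 / (n : ℝ)) ^ (k - 1) * (k.factorial : ℝ)
      * ((n.choose 2 : ℕ) : ℝ) ^ k := by
  intro k
  induction k with
  | zero => intro h; omega
  | succ k ih =>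
    intro _
    rcases Nat.eq_zero_or_pos k with rfl | hk
    · have h1 : (chains n 1).card ≤ n.choose 2 := by
        calc (chains n 1).card ≤ (Finset.univ : Finset (Fin 1 → S n)).card :=
              Finset.card_filter_le _ _
          _ = n.choose 2 := by
              rw [Finset.card_univ, Fintype.card_fun, Fintype.card_finset_len,
                Fintype.card_fin, Fintype.card_fin, pow_one]
      have h2 : ((chains n 1).card : ℝ) ≤ ((n.choose 2 : ℕ) : ℝ) :=
        Nat.cast_le.mpr h1
      simpa using h2
    · have hstep := chains_step (n := n) (k := k) hn hk
      have ihr := ih hk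
      have hn1 : (1 : ℕ) ≤ n := by omega
      have hnR : (1 : ℝ) ≤ (n : ℝ) := by exact_mod_cast hn1
      have hn0 : (n : ℝ) ≠ 0 := by linarith
      have hc : ((chains n (k + 1)).card : ℝ)
          ≤ ((k : ℝ) + 1) * ((n : ℝ) - 1) * ((chains n k).card : ℝ) := by
        have : (((chains n (k+1)).card : ℕ) : ℝ) ≤ (((k + 1) * (n - 1)) * (chains n k).card : ℕ) := Nat.cast_le.mpr hstep
        push_cast [Nat.cast_sub hn1] at this
        exact this
      have hnn : (0 : ℝ) ≤ ((k : ℝ) + 1) * ((n : ℝ) - 1) := by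
        have : (0 : ℝ) ≤ (k : ℝ) := Nat.cast_nonneg k
        nlinarith
      have h2 : ((chains n (k + 1)).card : ℝ)
          ≤ ((k : ℝ) + 1) * ((n : ℝ) - 1) *
            ((2 / (n : ℝ)) ^ (k - 1) * (k.factorial : ℝ)
              * ((n.choose 2 : ℕ) : ℝ) ^ k) :=
        hc.trans (mul_le_mul_of_nonneg_left ihr hnn)
      refine h2.trans (le_of_eq ?_)
      have hm : ((n.choose 2 : ℕ) : ℝ) = (n : ℝ) * ((n : ℝ) - 1) / 2 :=
        Nat.cast_choose_two (K := ℝ) n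
      have hkey : 2 / (n : ℝ) * ((n.choose 2 : ℕ) : ℝ) = (n : ℝ) - 1 := by
        rw [hm]; field_simp
      have hkk : k - 1 + 1 = k := by omega
      have hpow : (2 / (n : ℝ)) ^ (k - 1) * (2 / (n : ℝ)) = (2 / (n : ℝ)) ^ k := by
        rw [← pow_succ, hkk]
      have hfact : (((k + 1).factorial : ℕ) : ℝ) = ((k : ℝ) + 1) * (k.factorial : ℝ) := by
        rw [Nat.factorial_succ]; push_cast; ring
      simp only [Nat.add_sub_cancel]
      rw [hfact, ← hpow, pow_succ, ← hkey]
      ring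

end Stmt7Aux

open Classical in
/-- Let G₁,…,G_k be independent uniformly random 2-element subsets of
{1,…,n}.  The probability (counting measure on the finite sample space of k-tuples of
2-element subsets) that they form a chain — each G_i with i > 0 intersects the union
of the previous ones — i.e. a circuit of depth k, is at most `(2/n)^{k−1} · k!`. -/
theorem stmt_7 (n k : ℕ) (hn : 2 ≤ n) (hk : 1 ≤ k) :
    (((Finset.univ : Finset (Fin k → {s : Finset (Fin n) // s.card = 2})).filter
        (fun G => ∀ i : Fin k, 0 < i.1 →
          ∃ j : Fin k, j < i ∧ ((G i).1 ∩ (G j).1).Nonempty)).card : ℝ) /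
      ((Finset.univ : Finset (Fin k → {s : Finset (Fin n) // s.card = 2})).card : ℝ)
    ≤ (2/(n:ℝ))^(k-1) * (k.factorial) := by
  have key := Stmt7Aux.chains_card_le (n := n) hn k hk
  have huniv : ((Finset.univ : Finset (Fin k → Stmt7Aux.S n)).card : ℝ)
      = ((n.choose 2 : ℕ) : ℝ) ^ k := by
    rw [Finset.card_univ, Fintype.card_fun, Fintype.card_finset_len,
      Fintype.card_fin, Fintype.card_fin]
    push_cast
    ring
  have hchoose : 0 < n.choose 2 := Nat.choose_pos hn
  have hpos : (0 : ℝ) < ((n.choose 2 : ℕ) : ℝ) ^ k := by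
    apply pow_pos
    exact_mod_cast hchoose
  show ((Stmt7Aux.chains n k).card : ℝ)
      / ((Finset.univ : Finset (Fin k → Stmt7Aux.S n)).card : ℝ) ≤ _
  rw [huniv, div_le_iff₀ hpos]
  exact key
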